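/- Let w ∈ A_2 on ℝ. Fix k ∈ ℤ and let 𝒟, 𝒟′ be two (possibly different) translated dyadic grids on ℝ. Let u = Σ_{I∈𝒟, |I|=2^{-k}} ⟨w⟩_I χ_I and v = (Σ_{I∈𝒟′, |I|=2^{-k}} ⟨w^{-1}⟩_I χ_I)^{-1}. Then the joint two-weight constant satisfies [u,v]_{A_2} := sup_J ⟨u⟩_J ⟨v^{-1}⟩_J ≤ 9[w]_{A_2}, where the supremum is over bounded intervals J. -/

import Mathlib

open MeasureTheory

/-- The interval of the translated dyadic grid with offset `α`, scale `2^{-k}`, index `j`: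
`[α + j·2^{-k}, α + (j+1)·2^{-k})`. -/
def gridInterval (α : ℝ) (k : ℤ) (j : ℤ) : Set ℝ :=
  Set.Ico (α + (j : ℝ) * (2 : ℝ) ^ (-k)) (α + ((j : ℝ) + 1) * (2 : ℝ) ^ (-k))

/-- The averaging of `w` over the translated dyadic grid with offset `α` at scale `2^{-k}`:
at `x` the value is the average of `w` over the grid interval containing `x`. -/
noncomputable def gridAvg (w : ℝ → ℝ) (α : ℝ) (k : ℤ) (x : ℝ) : ℝ :=
  ((2 : ℝ) ^ (-k))⁻¹ *
    ∫ t in gridInterval α k ⌊(x - α) / (2 : ℝ) ^ (-k)⌋, w t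

/-- The average of `f` over the bounded interval `(a, b]`. -/
noncomputable def intervalAvg (f : ℝ → ℝ) (a b : ℝ) : ℝ :=
  (b - a)⁻¹ * ∫ x in Set.Ioc a b, f x

lemma my_dpos (k : ℤ) : (0:ℝ) < (2 : ℝ) ^ (-k) := by positivity

lemma my_floor_eq_of_mem (α : ℝ) (k : ℤ) {j : ℤ} {x : ℝ} (hx : x ∈ gridInterval α k j) :
    ⌊(x - α) / (2 : ℝ) ^ (-k)⌋ = j := by
  obtain ⟨h1, h2⟩ := hx
  have hd := my_dpos k
  rw [Int.floor_eq_iff]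
  constructor
  · rw [le_div_iff₀ hd]; linarith
  · rw [div_lt_iff₀ hd]; push_cast; linarith

lemma my_mem_floor (α : ℝ) (k : ℤ) (x : ℝ) :
    x ∈ gridInterval α k ⌊(x - α) / (2 : ℝ) ^ (-k)⌋ := by
  have hd := my_dpos k
  have h1 : (⌊(x - α) / (2:ℝ)^(-k)⌋ : ℝ) ≤ (x - α) / (2:ℝ)^(-k) := Int.floor_le _
  have h2 : (x - α) / (2:ℝ)^(-k) < ⌊(x - α) / (2:ℝ)^(-k)⌋ + 1 := Int.lt_floor_add_one _
  have h1' := (le_div_iff₀ hd).mp h1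
  have h2' := (div_lt_iff₀ hd).mp h2
  constructor
  · linarith
  · linarith

lemma my_grid_disjoint (α : ℝ) (k : ℤ) {i j : ℤ} (h : i ≠ j) :
    Disjoint (gridInterval α k i) (gridInterval α k j) := by
  rw [Set.disjoint_left]
  intro x hxi hxj
  exact h (by rw [← my_floor_eq_of_mem α k hxi, my_floor_eq_of_mem α k hxj])

lemma my_measurable (α : ℝ) (k : ℤ) (j : ℤ) : MeasurableSet (gridInterval α k j) :=
  measurableSet_Ico

lemma my_intOn_Ioc {f : ℝ → ℝ} (hf : LocallyIntegrable f volume) (c e : ℝ) :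
    IntegrableOn f (Set.Ioc c e) volume :=
  (hf.integrableOn_isCompact isCompact_Icc).mono_set Set.Ioc_subset_Icc_self

lemma my_gridAvg_nonneg {f : ℝ → ℝ} (hf : ∀ x, 0 ≤ f x) (α : ℝ) (k : ℤ) (x : ℝ) :
    0 ≤ gridAvg f α k x := by
  refine mul_nonneg (by positivity) ?_
  exact setIntegral_nonneg (my_measurable _ _ _) fun y _ => hf y

/-- Key estimate: the integral of the grid averaging over `(a,b]` is controlled by
`min (b-a) δ · δ⁻¹ · ∫ f` over the enlarged interval `(a-δ, b+δ]`. -/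
lemma my_key (f : ℝ → ℝ) (hf0 : ∀ x, 0 ≤ f x)
    (hfl : LocallyIntegrable f volume) (α : ℝ) (k : ℤ) (a b : ℝ) (hab : a < b) :
    ∫ x in Set.Ioc a b, gridAvg f α k x ≤
      min (b - a) ((2:ℝ)^(-k)) *
        (((2:ℝ)^(-k))⁻¹ * ∫ x in Set.Ioc (a - (2:ℝ)^(-k)) (b + (2:ℝ)^(-k)), f x) := by
  have hd : (0:ℝ) < (2:ℝ)^(-k) := my_dpos k
  set d : ℝ := (2:ℝ)^(-k) with hdd
  set m : ℤ := ⌊(a - α)/d⌋ with hm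
  set M : ℤ := ⌊(b - α)/d⌋ with hM
  have hmM : m ≤ M := Int.floor_le_floor (div_le_div_of_nonneg_right (by linarith) hd.le)
  set n : ℕ := (M - m).toNat + 1 with hn
  have hmn : (m : ℝ) + (n : ℝ) = (M : ℝ) + 1 := by
    have h : ((M - m).toNat : ℝ) = (M : ℝ) - m := by
      exact_mod_cast congrArg (Int.cast : ℤ → ℝ) (Int.toNat_of_nonneg (sub_nonneg.mpr hmM))
    rw [hn]
    push_cast
    linarith
  set t : ℕ → Set ℝ := fun i => Set.Ioc a b ∩ gridInterval α k (m + i) with ht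
  have htmeas : ∀ i, MeasurableSet (t i) := fun i =>
    measurableSet_Ioc.inter (my_measurable _ _ _)
  have hcover : Set.Ioc a b = ⋃ i ∈ Finset.range n, t i := by
    ext x
    simp only [Set.mem_iUnion, Finset.mem_range, exists_prop, ht, Set.mem_inter_iff]
    constructor
    · intro hx
      have hj := my_mem_floor α k x
      set j : ℤ := ⌊(x - α)/d⌋ with hj'
      have h1 : m ≤ j := Int.floor_le_floor (div_le_div_of_nonneg_right (by linarith [hx.1]) hd.le)
      have h2 : j ≤ M := Int.floor_le_floor (div_le_div_of_nonneg_right (by linarith [hx.2]) hd.le)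
      refine ⟨(j - m).toNat, by omega, hx, ?_⟩
      have : m + ((j - m).toNat : ℤ) = j := by omega
      rw [this]; exact hj
    · rintro ⟨i, _, hx, _⟩; exact hx
  have hdisj : (↑(Finset.range n) : Set ℕ).Pairwise (Function.onFun Disjoint t) := by
    intro i _ j _ hij
    exact Disjoint.mono Set.inter_subset_right Set.inter_subset_right
      (my_grid_disjoint α k (by exact_mod_cast fun h => hij (by omega)))
  set c : ℤ → ℝ := fun j => d⁻¹ * ∫ y in gridInterval α k j, f y with hc
  have hcnn : ∀ j, 0 ≤ c j := fun j =>
    mul_nonneg (by positivity) (setIntegral_nonneg (my_measurable _ _ _) fun y _ => hf0 y)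
  have hconst : ∀ i : ℕ, Set.EqOn (gridAvg f α k) (fun _ => c (m + i)) (t i) := by
    intro i x hx
    simp only [gridAvg, hc]
    rw [my_floor_eq_of_mem α k hx.2]
  have hvolfin : ∀ i, volume (t i) < ⊤ := fun i =>
    lt_of_le_of_lt (measure_mono Set.inter_subset_left) measure_Ioc_lt_top
  have hint : ∀ i ∈ Finset.range n, IntegrableOn (gridAvg f α k) (t i) volume := by
    intro i _
    exact (integrableOn_const (hvolfin i).ne).congr_fun
      (fun x hx => ((hconst i) hx).symm) (htmeas i)
  have hvol : ∀ i : ℕ, (volume (t i)).toReal ≤ min (b - a) d := by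
    intro i
    refine le_min ?_ ?_
    · have h1 : volume (t i) ≤ ENNReal.ofReal (b - a) := by
        rw [← Real.volume_Ioc]; exact measure_mono Set.inter_subset_left
      calc (volume (t i)).toReal ≤ (ENNReal.ofReal (b - a)).toReal :=
            ENNReal.toReal_mono ENNReal.ofReal_ne_top h1
        _ = b - a := ENNReal.toReal_ofReal (by linarith)
    · have h1 : volume (t i) ≤ ENNReal.ofReal d := by
        have : volume (gridInterval α k (m + i)) = ENNReal.ofReal d := by
          rw [gridInterval, Real.volume_Ico]; ring_nf; rw [hdd]
        rw [← this]; exact measure_mono Set.inter_subset_right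
      calc (volume (t i)).toReal ≤ (ENNReal.ofReal d).toReal :=
            ENNReal.toReal_mono ENNReal.ofReal_ne_top h1
        _ = d := ENNReal.toReal_ofReal hd.le
  have hsum : ∑ i ∈ Finset.range n, ∫ y in gridInterval α k (m + i), f y
      = ∫ y in Set.Ioc (α + m * d) (α + ((M:ℝ) + 1) * d), f y := by
    set g : ℕ → ℝ := fun i => α + ((m:ℝ) + i) * d with hg
    have hgle : ∀ i : ℕ, g i ≤ g (i+1) := by
      intro i; simp only [hg]; push_cast; nlinarith
    have hset : ∀ i : ℕ, gridInterval α k (m + (i:ℤ)) = Set.Ico (g i) (g (i+1)) := by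
      intro i
      simp only [gridInterval, hg]
      congr 1 <;> push_cast <;> ring
    have heach : ∀ i : ℕ, ∫ y in gridInterval α k (m + i), f y = ∫ y in g i..g (i+1), f y := by
      intro i
      rw [hset i, intervalIntegral.integral_of_le (hgle i),
        integral_Ico_eq_integral_Ioo, integral_Ioc_eq_integral_Ioo]
    have key := intervalIntegral.sum_integral_adjacent_intervals (f := f) (μ := volume) (a := g) (n := n)
      (fun i _ => by
        rw [intervalIntegrable_iff, Set.uIoc_of_le (hgle i)]
        exact my_intOn_Ioc hfl _ _)
    have hle0n : g 0 ≤ g n := by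
      simp only [hg]; push_cast
      have : (m : ℝ) ≤ (M : ℝ) + 1 := by exact_mod_cast (by omega : m ≤ M + 1)
      nlinarith
    calc ∑ i ∈ Finset.range n, ∫ y in gridInterval α k (m + i), f y
        = ∑ i ∈ Finset.range n, ∫ y in g i..g (i+1), f y :=
          Finset.sum_congr rfl fun i _ => heach i
      _ = ∫ y in (g 0)..(g n), f y := key
      _ = ∫ y in Set.Ioc (α + m * d) (α + ((M:ℝ) + 1) * d), f y := by
          rw [intervalIntegral.integral_of_le hle0n]
          have h0 : g 0 = α + m * d := by simp [hg]
          have hn' : g n = α + ((M:ℝ) + 1) * d := by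
            simp only [hg]; rw [hmn]
          rw [h0, hn']
  have hmono : ∫ y in Set.Ioc (α + m * d) (α + ((M:ℝ) + 1) * d), f y
      ≤ ∫ y in Set.Ioc (a - d) (b + d), f y := by
    apply setIntegral_mono_set (my_intOn_Ioc hfl _ _)
      (Filter.Eventually.of_forall fun y => hf0 y)
    apply HasSubset.Subset.eventuallyLE
    apply Set.Ioc_subset_Ioc
    · have h2 : (a - α)/d < (m:ℝ) + 1 := Int.lt_floor_add_one _
      have := (div_lt_iff₀ hd).mp h2
      nlinarith
    · have h1 : (M:ℝ) ≤ (b - α)/d := Int.floor_le _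
      have := (le_div_iff₀ hd).mp h1
      nlinarith
  calc ∫ x in Set.Ioc a b, gridAvg f α k x
      = ∑ i ∈ Finset.range n, ∫ x in t i, gridAvg f α k x := by
        rw [hcover]
        exact integral_biUnion_finset _ (fun i _ => htmeas i) hdisj hint
    _ = ∑ i ∈ Finset.range n, (volume (t i)).toReal * c (m + i) := by
        refine Finset.sum_congr rfl fun i _ => ?_
        rw [setIntegral_congr_fun (htmeas i) (hconst i), setIntegral_const, smul_eq_mul]; rfl
    _ ≤ ∑ i ∈ Finset.range n, min (b - a) d * c (m + i) := by
        refine Finset.sum_le_sum fun i _ => ?_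
        exact mul_le_mul_of_nonneg_right (hvol i) (hcnn _)
    _ = min (b - a) d * (d⁻¹ * ∑ i ∈ Finset.range n, ∫ y in gridInterval α k (m + i), f y) := by
        rw [Finset.mul_sum, Finset.mul_sum]
    _ ≤ min (b - a) d * (d⁻¹ * ∫ x in Set.Ioc (a - d) (b + d), f x) := by
        rw [hsum]
        have hmin : 0 ≤ min (b - a) d := le_min (by linarith) hd.le
        exact mul_le_mul_of_nonneg_left (mul_le_mul_of_nonneg_left hmono (by positivity)) hmin

/-- let `w ∈ A₂` with `[w]_{A₂} ≤ W`, and let `u` be the averaging of `w`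
over a translated dyadic grid `𝒟` (offset `α`) at scale `2^{-k}`, and
`v = (averaging of w⁻¹ over a grid 𝒟′ (offset β))⁻¹`.  Then the joint constant satisfies
`[u, v]_{A₂} = sup_J ⟨u⟩_J ⟨v⁻¹⟩_J ≤ 9W`. -/
theorem grid_two_weight_A2
    (w : ℝ → ℝ) (hw_pos : ∀ x, 0 < w x) (hw_loc : LocallyIntegrable w volume)
    (hwinv_loc : LocallyIntegrable (fun x => (w x)⁻¹) volume)
    (W : ℝ)
    (hA2 : ∀ a b : ℝ, a < b →
      intervalAvg w a b * intervalAvg (fun x => (w x)⁻¹) a b ≤ W)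
    (k : ℤ) (α β : ℝ) :
    ∀ a b : ℝ, a < b →
      intervalAvg (gridAvg w α k) a b *
        intervalAvg (gridAvg (fun x => (w x)⁻¹) β k) a b ≤ 9 * W := by
  intro a b hab
  have hd : (0:ℝ) < (2:ℝ)^(-k) := my_dpos k
  set d : ℝ := (2:ℝ)^(-k) with hdd
  have hL : (0:ℝ) < b - a := sub_pos.mpr hab
  have hw0 : ∀ x, 0 ≤ w x := fun x => (hw_pos x).le
  have hwi0 : ∀ x, 0 ≤ (w x)⁻¹ := fun x => inv_nonneg.mpr (hw0 x)
  set P : ℝ := ∫ x in Set.Ioc (a - d) (b + d), w x with hP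
  set Q : ℝ := ∫ x in Set.Ioc (a - d) (b + d), (w x)⁻¹ with hQ
  have hPnn : 0 ≤ P := setIntegral_nonneg measurableSet_Ioc fun x _ => hw0 x
  have hQnn : 0 ≤ Q := setIntegral_nonneg measurableSet_Ioc fun x _ => hwi0 x
  have hA := hA2 (a - d) (b + d) (by linarith)
  set E : ℝ := b + d - (a - d) with hE
  have hEpos : 0 < E := by rw [hE]; linarith
  have hA' : E⁻¹ * P * (E⁻¹ * Q) ≤ W := hA
  have hWnn : 0 ≤ W :=
    le_trans (mul_nonneg (mul_nonneg (by positivity) hPnn) (mul_nonneg (by positivity) hQnn)) hA'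
  set s : ℝ := min (b - a) d with hs
  have hsnn : 0 ≤ s := le_min hL.le hd.le
  have hU : intervalAvg (gridAvg w α k) a b ≤ (b - a)⁻¹ * (s * (d⁻¹ * P)) := by
    unfold intervalAvg
    exact mul_le_mul_of_nonneg_left (my_key w hw0 hw_loc α k a b hab) (by positivity)
  have hV : intervalAvg (gridAvg (fun x => (w x)⁻¹) β k) a b ≤ (b - a)⁻¹ * (s * (d⁻¹ * Q)) := by
    unfold intervalAvg
    exact mul_le_mul_of_nonneg_left (my_key _ hwi0 hwinv_loc β k a b hab) (by positivity)
  have hUnn : 0 ≤ intervalAvg (gridAvg w α k) a b := by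
    unfold intervalAvg
    exact mul_nonneg (by positivity)
      (setIntegral_nonneg measurableSet_Ioc fun x _ => my_gridAvg_nonneg hw0 α k x)
  have hVnn : 0 ≤ intervalAvg (gridAvg (fun x => (w x)⁻¹) β k) a b := by
    unfold intervalAvg
    exact mul_nonneg (by positivity)
      (setIntegral_nonneg measurableSet_Ioc fun x _ => my_gridAvg_nonneg hwi0 β k x)
  have hRHSnn : 0 ≤ (b - a)⁻¹ * (s * (d⁻¹ * P)) := by positivity
  have step1 : intervalAvg (gridAvg w α k) a b *
      intervalAvg (gridAvg (fun x => (w x)⁻¹) β k) a b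
      ≤ ((b - a)⁻¹ * (s * (d⁻¹ * P))) * ((b - a)⁻¹ * (s * (d⁻¹ * Q))) :=
    mul_le_mul hU hV hVnn hRHSnn
  have hfac : s * E ≤ 3 * ((b - a) * d) := by
    rcases le_total (b - a) d with h | h
    · rw [hs, min_eq_left h, hE]; nlinarith
    · rw [hs, min_eq_right h, hE]; nlinarith
  have hkey : ((b - a)⁻¹ * (s * (d⁻¹ * P))) * ((b - a)⁻¹ * (s * (d⁻¹ * Q)))
      = (s * E / ((b - a) * d))^2 * (E⁻¹ * P * (E⁻¹ * Q)) := by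
    field_simp
  have h9 : (s * E / ((b - a) * d))^2 ≤ 9 := by
    have h1 : 0 ≤ s * E / ((b - a) * d) := by positivity
    have h2 : s * E / ((b - a) * d) ≤ 3 := by
      rw [div_le_iff₀ (by positivity)]; linarith
    nlinarith
  have hTnn : 0 ≤ E⁻¹ * P * (E⁻¹ * Q) :=
    mul_nonneg (mul_nonneg (by positivity) hPnn) (mul_nonneg (by positivity) hQnn)
  calc intervalAvg (gridAvg w α k) a b * intervalAvg (gridAvg (fun x => (w x)⁻¹) β k) a b
      ≤ ((b - a)⁻¹ * (s * (d⁻¹ * P))) * ((b - a)⁻¹ * (s * (d⁻¹ * Q))) := step1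
    _ = (s * E / ((b - a) * d))^2 * (E⁻¹ * P * (E⁻¹ * Q)) := hkey
    _ ≤ 9 * W := mul_le_mul h9 hA' hTnn (by norm_num)
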